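/- The curve α*(u) = (u, (u/6)(2 cosh(2 ln u) − sinh(2 ln u)), (u/6)(-cosh(2 ln u) + 2 sinh(2 ln u))), for u > 0, satisfies κ(u) = 1/u and τ(u) = 2/u, where κ(u) = √|y''(u)² − z''(u)²| and τ(u) = (y''z''' − y'''z'')/κ². In particular, the ratio τ/κ is constant (equal to 2), so α* is a general helix in G³₁. -/
import Mathlib


noncomputable def yαs : ℝ → ℝ := fun u =>
  u / 6 * (2 * Real.cosh (2 * Real.log u) - Real.sinh (2 * Real.log u))

noncomputable def zαs : ℝ → ℝ := fun u =>
  u / 6 * (-(Real.cosh (2 * Real.log u)) + 2 * Real.sinh (2 * Real.log u))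

noncomputable def καs : ℝ → ℝ := fun u =>
  Real.sqrt |(deriv (deriv yαs) u) ^ 2 - (deriv (deriv zαs) u) ^ 2|

noncomputable def ταs : ℝ → ℝ := fun u =>
  (deriv (deriv yαs) u * deriv (deriv (deriv zαs)) u -
      deriv (deriv (deriv yαs)) u * deriv (deriv zαs) u) / (καs u) ^ 2

open Set

lemma deriv_eqOn_pos {f g : ℝ → ℝ} (h : EqOn f g (Ioi 0)) {u : ℝ} (hu : u ∈ Ioi (0:ℝ)) :
    deriv f u = deriv g u := by
  apply Filter.EventuallyEq.deriv_eq
  filter_upwards [Ioi_mem_nhds hu] with v hv using h hv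

lemma exp_two_log {u : ℝ} (hu : 0 < u) : Real.exp (2 * Real.log u) = u ^ 2 := by
  rw [show (2:ℝ) * Real.log u = Real.log (u ^ 2) by
        rw [Real.log_pow]; push_cast; ring,
      Real.exp_log (by positivity)]

lemma yαs_eqOn : EqOn yαs (fun u => u ^ 3 / 12 + u⁻¹ / 4) (Ioi 0) := by
  intro u hu
  have hu' : (0:ℝ) < u := hu
  simp only [yαs, Real.cosh_eq, Real.sinh_eq, Real.exp_neg, exp_two_log hu']
  field_simp
  ring

lemma zαs_eqOn : EqOn zαs (fun u => u ^ 3 / 12 - u⁻¹ / 4) (Ioi 0) := by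
  intro u hu
  have hu' : (0:ℝ) < u := hu
  simp only [zαs, Real.cosh_eq, Real.sinh_eq, Real.exp_neg, exp_two_log hu']
  field_simp
  ring

lemma dy1 : EqOn (deriv yαs) (fun u => u ^ 2 / 4 - (u ^ 2)⁻¹ / 4) (Ioi 0) := by
  intro u hu
  have hu' : (0:ℝ) < u := hu
  rw [deriv_eqOn_pos yαs_eqOn hu]
  have h : HasDerivAt (fun u : ℝ => u ^ 3 / 12 + u⁻¹ / 4)
      ((3:ℕ) * u ^ 2 / 12 + -(u ^ 2)⁻¹ / 4) u :=
    ((hasDerivAt_pow 3 u).div_const 12).add ((hasDerivAt_inv hu'.ne').div_const 4)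
  rw [h.deriv]; push_cast; ring

lemma dz1 : EqOn (deriv zαs) (fun u => u ^ 2 / 4 + (u ^ 2)⁻¹ / 4) (Ioi 0) := by
  intro u hu
  have hu' : (0:ℝ) < u := hu
  rw [deriv_eqOn_pos zαs_eqOn hu]
  have h : HasDerivAt (fun u : ℝ => u ^ 3 / 12 - u⁻¹ / 4)
      ((3:ℕ) * u ^ 2 / 12 - -(u ^ 2)⁻¹ / 4) u :=
    ((hasDerivAt_pow 3 u).div_const 12).sub ((hasDerivAt_inv hu'.ne').div_const 4)
  rw [h.deriv]; push_cast; ring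

lemma dy2 : EqOn (deriv (deriv yαs)) (fun u => u / 2 + (u ^ 3)⁻¹ / 2) (Ioi 0) := by
  intro u hu
  have hu' : (0:ℝ) < u := hu
  rw [deriv_eqOn_pos dy1 hu]
  have h : HasDerivAt (fun u : ℝ => u ^ 2 / 4 - (u ^ 2)⁻¹ / 4)
      ((2:ℕ) * u ^ 1 / 4 - -((2:ℕ) * u ^ 1) / (u ^ 2) ^ 2 / 4) u :=
    ((hasDerivAt_pow 2 u).div_const 4).sub
      (((hasDerivAt_pow 2 u).inv (pow_ne_zero 2 hu'.ne')).div_const 4)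
  rw [h.deriv]; push_cast; field_simp; ring

lemma dz2 : EqOn (deriv (deriv zαs)) (fun u => u / 2 - (u ^ 3)⁻¹ / 2) (Ioi 0) := by
  intro u hu
  have hu' : (0:ℝ) < u := hu
  rw [deriv_eqOn_pos dz1 hu]
  have h : HasDerivAt (fun u : ℝ => u ^ 2 / 4 + (u ^ 2)⁻¹ / 4)
      ((2:ℕ) * u ^ 1 / 4 + -((2:ℕ) * u ^ 1) / (u ^ 2) ^ 2 / 4) u :=
    ((hasDerivAt_pow 2 u).div_const 4).add
      (((hasDerivAt_pow 2 u).inv (pow_ne_zero 2 hu'.ne')).div_const 4)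
  rw [h.deriv]; push_cast; field_simp; ring

lemma dy3 : EqOn (deriv (deriv (deriv yαs))) (fun u => 1 / 2 - 3 * (u ^ 4)⁻¹ / 2) (Ioi 0) := by
  intro u hu
  have hu' : (0:ℝ) < u := hu
  rw [deriv_eqOn_pos dy2 hu]
  have h : HasDerivAt (fun u : ℝ => u / 2 + (u ^ 3)⁻¹ / 2)
      (1 / 2 + -((3:ℕ) * u ^ 2) / (u ^ 3) ^ 2 / 2) u :=
    ((hasDerivAt_id u).div_const 2).add
      (((hasDerivAt_pow 3 u).inv (pow_ne_zero 3 hu'.ne')).div_const 2)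
  rw [h.deriv]; push_cast; field_simp; ring

lemma dz3 : EqOn (deriv (deriv (deriv zαs))) (fun u => 1 / 2 + 3 * (u ^ 4)⁻¹ / 2) (Ioi 0) := by
  intro u hu
  have hu' : (0:ℝ) < u := hu
  rw [deriv_eqOn_pos dz2 hu]
  have h : HasDerivAt (fun u : ℝ => u / 2 - (u ^ 3)⁻¹ / 2)
      (1 / 2 - -((3:ℕ) * u ^ 2) / (u ^ 3) ^ 2 / 2) u :=
    ((hasDerivAt_id u).div_const 2).sub
      (((hasDerivAt_pow 3 u).inv (pow_ne_zero 3 hu'.ne')).div_const 2)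
  rw [h.deriv]; push_cast; field_simp; ring

lemma καs_eq {u : ℝ} (hu : 0 < u) : καs u = 1 / u := by
  have hu' : u ∈ Ioi (0:ℝ) := hu
  have habs : (deriv (deriv yαs) u) ^ 2 - (deriv (deriv zαs) u) ^ 2 = (1 / u) ^ 2 := by
    rw [dy2 hu', dz2 hu']
    field_simp
    ring
  rw [καs, habs, abs_of_nonneg (by positivity), Real.sqrt_sq (by positivity)]

lemma ταs_eq {u : ℝ} (hu : 0 < u) : ταs u = 2 / u := by
  have hu' : u ∈ Ioi (0:ℝ) := hu
  rw [ταs, καs_eq hu, dy2 hu', dz2 hu', dy3 hu', dz3 hu']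
  field_simp
  ring

theorem stmt3 :
    (∀ u : ℝ, 0 < u → καs u = 1 / u ∧ ταs u = 2 / u) ∧
    (∀ u : ℝ, 0 < u → ταs u / καs u = 2) := by
  constructor
  · exact fun u hu => ⟨καs_eq hu, ταs_eq hu⟩
  · intro u hu
    rw [καs_eq hu, ταs_eq hu]
    field_simp
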